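/- Let n be a positive integer, Φ an n×n real orthogonal matrix, d : Fin n → ℝ with d i ≥ 0, ρ : Fin n → ℝ with ρ i > 0, R an n×n real symmetric positive definite matrix and λ ≥ 0. Define S = (I + λ R Φ diag(d) Φᵀ)⁻¹, the approximating smoother S* = Φ (I + λ diag(d ∘ ρ))⁻¹ Φᵀ (where d ∘ ρ is the entrywise product), and the perturbation matrix Δ = R Φ diag(ρ)⁻¹ Φᵀ − I. Then S (I + Δ) = (I + S Δ) S*. -/

import Mathlib

open Matrix

/-- The key perturbation identity (B.10): `S (I + Δ) = (I + S Δ) S*`, where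
`S*` is the exactly diagonalizable approximation of the smoother and
`Δ = R Φ diag(ρ)⁻¹ Φᵀ − I` is the perturbation matrix. -/
theorem smoother_perturbation_identity
    (n : ℕ) (hn : 0 < n)
    (Φ : Matrix (Fin n) (Fin n) ℝ)
    (hΦ₁ : Φᵀ * Φ = 1) (hΦ₂ : Φ * Φᵀ = 1)
    (d : Fin n → ℝ) (hd : ∀ i, 0 ≤ d i)
    (ρ : Fin n → ℝ) (hρ : ∀ i, 0 < ρ i)
    (R : Matrix (Fin n) (Fin n) ℝ) (hR : R.PosDef)
    (lam : ℝ) (hlam : 0 ≤ lam)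
    (S Sstar Δ : Matrix (Fin n) (Fin n) ℝ)
    (hS : S = ((1 : Matrix (Fin n) (Fin n) ℝ) + lam • (R * Φ * Matrix.diagonal d * Φᵀ))⁻¹)
    (hSstar : Sstar =
      Φ * ((1 : Matrix (Fin n) (Fin n) ℝ) + lam • Matrix.diagonal (fun i => d i * ρ i))⁻¹ * Φᵀ)
    (hΔ : Δ = R * Φ * Matrix.diagonal (fun i => (ρ i)⁻¹) * Φᵀ - 1) :
    S * (1 + Δ) = (1 + S * Δ) * Sstar := by
  -- entrywise positivity of 1 + λ dᵢ ρᵢ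
  have hpos : ∀ i, (0 : ℝ) < 1 + lam * (d i * ρ i) := fun i => by
    have : (0:ℝ) ≤ lam * (d i * ρ i) :=
      mul_nonneg hlam (mul_nonneg (hd i) (hρ i).le)
    linarith
  -- cancellation helper
  have cancel : ∀ X Y : Matrix (Fin n) (Fin n) ℝ, X * Φᵀ * (Φ * Y) = X * Y := by
    intro X Y
    rw [Matrix.mul_assoc X, ← Matrix.mul_assoc Φᵀ, hΦ₁, Matrix.one_mul]
  -- the middle matrix M and its inverse, explicitly diagonal
  set M : Matrix (Fin n) (Fin n) ℝ :=
    (1 : Matrix (Fin n) (Fin n) ℝ) + lam • Matrix.diagonal (fun i => d i * ρ i) with hMdef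
  have hMdiag : M = Matrix.diagonal (fun i => 1 + lam * (d i * ρ i)) := by
    rw [hMdef]
    ext i j
    by_cases h : i = j <;>
      simp [Matrix.diagonal_apply, Matrix.one_apply, h]
  have hMinv : M⁻¹ = Matrix.diagonal (fun i => (1 + lam * (d i * ρ i))⁻¹) := by
    rw [hMdiag]
    apply Matrix.inv_eq_right_inv
    have h1 : (fun i => (1 + lam * (d i * ρ i)) * (1 + lam * (d i * ρ i))⁻¹)
        = fun _ : Fin n => (1:ℝ) := funext fun i => mul_inv_cancel₀ (hpos i).ne'
    rw [Matrix.diagonal_mul_diagonal, h1, Matrix.diagonal_one]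
  -- the matrix A = S⁻¹ and its invertibility
  set A : Matrix (Fin n) (Fin n) ℝ :=
    (1 : Matrix (Fin n) (Fin n) ℝ) + lam • (R * Φ * Matrix.diagonal d * Φᵀ) with hAdef
  have hRu : IsUnit R.det := hR.det_pos.ne'.isUnit
  have hA_fact : A = R * (R⁻¹ + lam • (Φ * Matrix.diagonal d * Φᵀ)) := by
    rw [Matrix.mul_add, Matrix.mul_smul, Matrix.mul_nonsing_inv R hRu, hAdef]
    simp only [Matrix.mul_assoc]
  have hds : Matrix.diagonal (fun i => lam * d i) = lam • Matrix.diagonal d := by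
    ext i j
    by_cases h : i = j <;> simp [Matrix.diagonal_apply, h]
  have hB_posdef : (R⁻¹ + lam • (Φ * Matrix.diagonal d * Φᵀ)).PosDef := by
    apply Matrix.PosDef.add_posSemidef hR.inv
    have h1 : (Matrix.diagonal (fun i => lam * d i)).PosSemidef :=
      Matrix.posSemidef_diagonal_iff.mpr fun i => mul_nonneg hlam (hd i)
    have h2 := h1.mul_mul_conjTranspose_same Φ
    rw [Matrix.conjTranspose_eq_transpose_of_trivial, hds, Matrix.mul_smul,
      Matrix.smul_mul] at h2
    exact h2
  have hAu : IsUnit A.det := by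
    rw [hA_fact, Matrix.det_mul]
    exact hRu.mul hB_posdef.det_pos.ne'.isUnit
  have hSA : S * A = 1 := by rw [hS]; exact Matrix.nonsing_inv_mul A hAu
  -- key identity : (A + Δ) * Sstar = 1 + Δ
  have hkey : (A + Δ) * Sstar = 1 + Δ := by
    have hAΔ : A + Δ = R * Φ * Matrix.diagonal (fun i => lam * d i + (ρ i)⁻¹) * Φᵀ := by
      rw [hAdef, hΔ]
      have h4 : Matrix.diagonal (fun i => lam * d i + (ρ i)⁻¹)
          = lam • Matrix.diagonal d + Matrix.diagonal (fun i => (ρ i)⁻¹) := by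
        rw [← hds, ← Matrix.diagonal_add]
      rw [h4, Matrix.mul_add, Matrix.add_mul, Matrix.mul_smul, Matrix.smul_mul]
      abel
    rw [hAΔ, hSstar, hMinv, Matrix.mul_assoc Φ, cancel, ← Matrix.mul_assoc,
      Matrix.mul_assoc (R * Φ), Matrix.diagonal_mul_diagonal]
    have h5 : (fun i => (lam * d i + (ρ i)⁻¹) * (1 + lam * (d i * ρ i))⁻¹)
        = fun i => (ρ i)⁻¹ := by
      funext i
      have hz1 := (hpos i).ne'
      have hz2 := (hρ i).ne'
      field_simp
      rw [add_comm _ (1:ℝ), div_self (by rwa [← mul_assoc] at hz1)]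
    rw [h5, hΔ]
    simp only [Matrix.mul_assoc]
    abel
  calc S * (1 + Δ) = S * ((A + Δ) * Sstar) := by rw [hkey]
    _ = (S * A + S * Δ) * Sstar := by
        rw [← Matrix.mul_assoc, Matrix.mul_add]
    _ = (1 + S * Δ) * Sstar := by rw [hSA]
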